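/- (Error bound of Theorem 1.) Let m, ℓ ∈ ℕ and let p, p_Z ≥ 0 with p + p_Z ≤ 1/2 and p + p_Z > 0. Suppose d, d⁰ : ({-1,0,1}^m) → ℝ satisfy |d_ω| ≤ (1 - 2p - 2p_Z)^{|ω|}·|d⁰_ω| for every frequency vector ω, and Σ_ω 2^{-|ω|} (d⁰_ω)² ≤ 1. Define f(θ) = Σ_ω d_ω Φ_ω(θ) and its low-weight truncation g(θ) = Σ_{|ω| ≤ ℓ} d_ω Φ_ω(θ). Then Δ(f,g) ≤ (1 - 2p - 2p_Z)^{ℓ+1} and moreover Δ(f,g) ≤ exp(-2(p + p_Z)·ℓ). -/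

import Mathlib

open MeasureTheory Finset

/-- The trigonometric monomial factor: `φ₀ = 1`, `φ₁ = cos`, `φ₋₁ = sin`. -/
noncomputable def phi (w : ℤ) (x : ℝ) : ℝ :=
  if w = 1 then Real.cos x else if w = -1 then Real.sin x else 1

/-- The multivariate trigonometric monomial `Φ_ω(θ) = ∏ i, φ_{ω i}(θ i)`. -/
noncomputable def Phi {m : ℕ} (ω : Fin m → ℤ) (θ : Fin m → ℝ) : ℝ :=
  ∏ i, phi (ω i) (θ i)

/-- The weight `|ω|` of a frequency vector: the number of nonzero entries. -/
def wt {m : ℕ} (ω : Fin m → ℤ) : ℕ := (Finset.univ.filter fun i => ω i ≠ 0).card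

/-- The finite set of all frequency vectors `ω ∈ {-1,0,1}^m`. -/
def freqSet (m : ℕ) : Finset (Fin m → ℤ) :=
  Fintype.piFinset fun _ => ({-1, 0, 1} : Finset ℤ)

/-- The mean of a function over the cube `[0, 2π]^m`. -/
noncomputable def cubeMean (m : ℕ) (h : (Fin m → ℝ) → ℝ) : ℝ :=
  ((2 * Real.pi) ^ m)⁻¹ *
    ∫ θ in Set.Icc (0 : Fin m → ℝ) (fun _ => 2 * Real.pi), h θ

/-- The average `L²` distance `Δ(f,g)` over the parameter cube `[0, 2π]^m`. -/
noncomputable def Delta (m : ℕ) (f g : (Fin m → ℝ) → ℝ) : ℝ :=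
  Real.sqrt (cubeMean m fun θ => (f θ - g θ) ^ 2)

lemma continuous_phi (w : ℤ) : Continuous (phi w) := by
  unfold phi; split_ifs <;> fun_prop

lemma oneD (a b : ℤ) (ha : a ∈ ({-1, 0, 1} : Finset ℤ)) (hb : b ∈ ({-1, 0, 1} : Finset ℤ)) :
    ∫ x in Set.Icc (0 : ℝ) (2 * Real.pi), phi a x * phi b x
      = if a = b then (if a = 0 then 2 * Real.pi else Real.pi) else 0 := by
  have h1 : Real.sin (Real.pi * 2) = 0 := by rw [mul_comm]; exact Real.sin_two_pi
  have h2 : Real.cos (Real.pi * 2) = 1 := by rw [mul_comm]; exact Real.cos_two_pi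
  have h3 : ∫ x in (0:ℝ)..Real.pi * 2, Real.cos x * Real.sin x = 0 := by
    rw [intervalIntegral.integral_congr (g := fun x => Real.sin x * Real.cos x)
      (fun x _ => mul_comm _ _)]
    simp [integral_sin_mul_cos₁, h1]
  rw [MeasureTheory.integral_Icc_eq_integral_Ioc,
    ← intervalIntegral.integral_of_le (by positivity)]
  fin_cases ha <;> fin_cases hb <;>
    simp [phi, ← sq, integral_cos_sq, integral_sin_sq, mul_comm, h1, h2, h3]

lemma cube_int_prod {m : ℕ} (h : Fin m → ℝ → ℝ) :
    ∫ θ in Set.Icc (0 : Fin m → ℝ) (fun _ => 2 * Real.pi), ∏ i, h i (θ i)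
      = ∏ i, ∫ x in Set.Icc (0 : ℝ) (2 * Real.pi), h i x := by
  have hset : Set.Icc (0 : Fin m → ℝ) (fun _ => 2 * Real.pi)
      = Set.pi Set.univ fun _ : Fin m => Set.Icc (0 : ℝ) (2 * Real.pi) := by
    rw [Set.pi_univ_Icc]; rfl
  rw [hset, ← MeasureTheory.integral_indicator (MeasurableSet.univ_pi fun _ => measurableSet_Icc)]
  have hind : ∀ θ : Fin m → ℝ,
      Set.indicator (Set.pi Set.univ fun _ : Fin m => Set.Icc (0 : ℝ) (2 * Real.pi))
        (fun θ => ∏ i, h i (θ i)) θ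
      = ∏ i, Set.indicator (Set.Icc (0 : ℝ) (2 * Real.pi)) (h i) (θ i) := by
    intro θ
    by_cases hθ : θ ∈ Set.pi Set.univ fun _ : Fin m => Set.Icc (0 : ℝ) (2 * Real.pi)
    · rw [Set.indicator_of_mem hθ]
      exact Finset.prod_congr rfl fun i _ =>
        (Set.indicator_of_mem (hθ i (Set.mem_univ i)) _).symm
    · rw [Set.indicator_of_notMem hθ]
      obtain ⟨i, hi⟩ : ∃ i, θ i ∉ Set.Icc (0 : ℝ) (2 * Real.pi) := by
        by_contra hc
        push_neg at hc
        exact hθ fun i _ => hc i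
      exact (Finset.prod_eq_zero (Finset.mem_univ i) (Set.indicator_of_notMem hi _)).symm
  simp_rw [hind]
  rw [MeasureTheory.integral_fintype_prod_volume_eq_prod]
  exact Finset.prod_congr rfl fun i _ => (MeasureTheory.integral_indicator measurableSet_Icc)

lemma orth {m : ℕ} (ω ω' : Fin m → ℤ) (hω : ω ∈ freqSet m) (hω' : ω' ∈ freqSet m) :
    ∫ θ in Set.Icc (0 : Fin m → ℝ) (fun _ => 2 * Real.pi), Phi ω θ * Phi ω' θ
      = if ω = ω' then (2 * Real.pi) ^ m * ((2 : ℝ) ^ wt ω)⁻¹ else 0 := by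
  have hmem : ∀ i, ω i ∈ ({-1, 0, 1} : Finset ℤ) := Fintype.mem_piFinset.mp hω
  have hmem' : ∀ i, ω' i ∈ ({-1, 0, 1} : Finset ℤ) := Fintype.mem_piFinset.mp hω'
  have hfun : ∀ θ : Fin m → ℝ, Phi ω θ * Phi ω' θ
      = ∏ i, (phi (ω i) (θ i) * phi (ω' i) (θ i)) := by
    intro θ; rw [Phi, Phi, ← Finset.prod_mul_distrib]
  simp_rw [hfun]
  rw [cube_int_prod (fun i x => phi (ω i) x * phi (ω' i) x),
    Finset.prod_congr rfl fun i _ => oneD _ _ (hmem i) (hmem' i)]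
  split_ifs with hee
  · subst hee
    rw [Finset.prod_congr rfl fun i (_ : i ∈ Finset.univ) =>
      (if_pos rfl : (if ω i = ω i then (if ω i = 0 then 2*Real.pi else Real.pi) else 0) = _)]
    have hwtle : wt ω ≤ m := by
      simpa [wt] using Finset.card_filter_le Finset.univ fun i => ω i ≠ 0
    have hz : (Finset.univ.filter fun i => ω i = 0).card = m - wt ω := by
      have := Finset.card_filter_add_card_filter_not
        (s := (Finset.univ : Finset (Fin m))) (p := fun i => ω i = 0)
      simp only [Finset.card_univ, Fintype.card_fin] at this
      have hwt : (Finset.univ.filter fun i => ¬ ω i = 0).card = wt ω := rfl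
      omega
    rw [Finset.prod_ite, Finset.prod_const, Finset.prod_const, hz]
    have hwt : (Finset.univ.filter fun i => ¬ ω i = 0).card = wt ω := rfl
    rw [hwt]
    have hpow : (2 * Real.pi) ^ m = (2 * Real.pi) ^ (m - wt ω) * (2 * Real.pi) ^ wt ω := by
      rw [← pow_add, Nat.sub_add_cancel hwtle]
    rw [hpow, mul_pow]
    have h2 : ((2:ℝ) ^ wt ω) ≠ 0 := by positivity
    field_simp
    ring
  · obtain ⟨i, hi⟩ := Function.ne_iff.mp hee
    exact Finset.prod_eq_zero (Finset.mem_univ i) (if_neg hi)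

lemma continuous_Phi {m : ℕ} (ω : Fin m → ℤ) : Continuous (Phi ω) := by
  unfold Phi
  exact continuous_finset_prod _ fun i _ => (continuous_phi (ω i)).comp (continuous_apply i)

lemma parseval {m : ℕ} (d : (Fin m → ℤ) → ℝ) (S : Finset (Fin m → ℤ))
    (hS : S ⊆ freqSet m) :
    cubeMean m (fun θ => (∑ ω ∈ S, d ω * Phi ω θ) ^ 2)
      = ∑ ω ∈ S, d ω ^ 2 * ((2 : ℝ) ^ wt ω)⁻¹ := by
  have hintg : ∀ ω ω' : Fin m → ℤ, IntegrableOn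
      (fun θ => d ω * d ω' * (Phi ω θ * Phi ω' θ))
      (Set.Icc (0 : Fin m → ℝ) (fun _ => 2 * Real.pi)) := by
    intro ω ω'
    exact (Continuous.integrableOn_Icc (by
      exact (continuous_const.mul ((continuous_Phi ω).mul (continuous_Phi ω')))))
  have hfun : ∀ θ : Fin m → ℝ, (∑ ω ∈ S, d ω * Phi ω θ) ^ 2
      = ∑ ω ∈ S, ∑ ω' ∈ S, d ω * d ω' * (Phi ω θ * Phi ω' θ) := by
    intro θ
    rw [sq, Finset.sum_mul_sum]
    exact Finset.sum_congr rfl fun ω _ => Finset.sum_congr rfl fun ω' _ => by ring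
  unfold cubeMean
  simp_rw [hfun]
  rw [MeasureTheory.integral_finset_sum S fun ω _ =>
    (integrable_finset_sum S fun ω' _ => hintg ω ω')]
  have hin : ∀ ω ∈ S, ∫ θ in Set.Icc (0 : Fin m → ℝ) (fun _ => 2 * Real.pi),
      ∑ ω' ∈ S, d ω * d ω' * (Phi ω θ * Phi ω' θ)
      = d ω ^ 2 * ((2 * Real.pi) ^ m * ((2 : ℝ) ^ wt ω)⁻¹) := by
    intro ω hω
    rw [MeasureTheory.integral_finset_sum S fun ω' _ => hintg ω ω']
    have : ∀ ω' ∈ S, ∫ θ in Set.Icc (0 : Fin m → ℝ) (fun _ => 2 * Real.pi),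
        d ω * d ω' * (Phi ω θ * Phi ω' θ)
        = if ω = ω' then d ω ^ 2 * ((2 * Real.pi) ^ m * ((2 : ℝ) ^ wt ω)⁻¹) else 0 := by
      intro ω' hω'
      rw [MeasureTheory.integral_const_mul, orth ω ω' (hS hω) (hS hω')]
      split_ifs with he
      · subst he; ring
      · simp
    rw [Finset.sum_congr rfl this, Finset.sum_ite_eq S ω _, if_pos hω]
  rw [Finset.sum_congr rfl hin, Finset.mul_sum]
  refine Finset.sum_congr rfl fun ω _ => ?_
  have hne : ((2 : ℝ) * Real.pi) ^ m ≠ 0 := by positivity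
  field_simp

theorem stmt4 (m ℓ : ℕ) (p pZ : ℝ) (hp : 0 ≤ p) (hpZ : 0 ≤ pZ)
    (hsum : p + pZ ≤ 1 / 2) (hpos : 0 < p + pZ)
    (d d0 : (Fin m → ℤ) → ℝ)
    (hd : ∀ ω ∈ freqSet m, |d ω| ≤ (1 - 2 * p - 2 * pZ) ^ wt ω * |d0 ω|)
    (hd0 : ∑ ω ∈ freqSet m, ((2 : ℝ) ^ wt ω)⁻¹ * d0 ω ^ 2 ≤ 1) :
    Delta m (fun θ => ∑ ω ∈ freqSet m, d ω * Phi ω θ)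
        (fun θ => ∑ ω ∈ (freqSet m).filter (fun ω => wt ω ≤ ℓ), d ω * Phi ω θ) ≤
        (1 - 2 * p - 2 * pZ) ^ (ℓ + 1) ∧
      Delta m (fun θ => ∑ ω ∈ freqSet m, d ω * Phi ω θ)
        (fun θ => ∑ ω ∈ (freqSet m).filter (fun ω => wt ω ≤ ℓ), d ω * Phi ω θ) ≤
        Real.exp (-2 * (p + pZ) * ℓ) := by
  set q : ℝ := 1 - 2 * p - 2 * pZ with hq
  have hq0 : 0 ≤ q := by rw [hq]; linarith
  have hq1 : q ≤ 1 := by rw [hq]; linarith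
  set S : Finset (Fin m → ℤ) := (freqSet m).filter (fun ω => ¬ wt ω ≤ ℓ) with hSdef
  have hSsub : S ⊆ freqSet m := Finset.filter_subset _ _
  have hdiff : ∀ θ : Fin m → ℝ,
      ((∑ ω ∈ freqSet m, d ω * Phi ω θ)
        - ∑ ω ∈ (freqSet m).filter (fun ω => wt ω ≤ ℓ), d ω * Phi ω θ)
      = ∑ ω ∈ S, d ω * Phi ω θ := by
    intro θ
    rw [← Finset.sum_filter_add_sum_filter_not (freqSet m) (fun ω => wt ω ≤ ℓ)
      (fun ω => d ω * Phi ω θ)]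
    ring
  have hDelta : Delta m (fun θ => ∑ ω ∈ freqSet m, d ω * Phi ω θ)
      (fun θ => ∑ ω ∈ (freqSet m).filter (fun ω => wt ω ≤ ℓ), d ω * Phi ω θ)
      = Real.sqrt (∑ ω ∈ S, d ω ^ 2 * ((2 : ℝ) ^ wt ω)⁻¹) := by
    unfold Delta
    congr 1
    rw [← parseval d S hSsub]
    congr 1
    funext θ
    rw [hdiff θ]
  have hbound : ∑ ω ∈ S, d ω ^ 2 * ((2 : ℝ) ^ wt ω)⁻¹ ≤ (q ^ (ℓ + 1)) ^ 2 := by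
    have step1 : ∀ ω ∈ S, d ω ^ 2 * ((2 : ℝ) ^ wt ω)⁻¹
        ≤ (q ^ (ℓ + 1)) ^ 2 * (((2 : ℝ) ^ wt ω)⁻¹ * d0 ω ^ 2) := by
      intro ω hω
      have hωf : ω ∈ freqSet m := hSsub hω
      have hwt : ℓ + 1 ≤ wt ω := by
        have := (Finset.mem_filter.mp hω).2
        omega
      have h1 : |d ω| ^ 2 ≤ (q ^ wt ω * |d0 ω|) ^ 2 :=
        pow_le_pow_left₀ (abs_nonneg _) (hd ω hωf) 2
      have h2 : (q ^ wt ω) ^ 2 ≤ (q ^ (ℓ + 1)) ^ 2 :=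
        pow_le_pow_left₀ (pow_nonneg hq0 _) (pow_le_pow_of_le_one hq0 hq1 hwt) 2
      have h3 : d ω ^ 2 ≤ (q ^ (ℓ + 1)) ^ 2 * d0 ω ^ 2 := by
        have h2' : (q ^ wt ω * |d0 ω|) ^ 2 ≤ (q ^ (ℓ + 1)) ^ 2 * d0 ω ^ 2 := by
          rw [mul_pow, sq_abs]
          exact mul_le_mul_of_nonneg_right h2 (sq_nonneg _)
        have := h1.trans h2'
        rwa [sq_abs] at this
      have h4 : (0:ℝ) ≤ ((2 : ℝ) ^ wt ω)⁻¹ := by positivity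
      calc d ω ^ 2 * ((2 : ℝ) ^ wt ω)⁻¹
          ≤ (q ^ (ℓ + 1)) ^ 2 * d0 ω ^ 2 * ((2 : ℝ) ^ wt ω)⁻¹ :=
            mul_le_mul_of_nonneg_right h3 h4
        _ = (q ^ (ℓ + 1)) ^ 2 * (((2 : ℝ) ^ wt ω)⁻¹ * d0 ω ^ 2) := by ring
    calc ∑ ω ∈ S, d ω ^ 2 * ((2 : ℝ) ^ wt ω)⁻¹
        ≤ ∑ ω ∈ S, (q ^ (ℓ + 1)) ^ 2 * (((2 : ℝ) ^ wt ω)⁻¹ * d0 ω ^ 2) :=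
          Finset.sum_le_sum step1
      _ = (q ^ (ℓ + 1)) ^ 2 * ∑ ω ∈ S, ((2 : ℝ) ^ wt ω)⁻¹ * d0 ω ^ 2 := by
          rw [Finset.mul_sum]
      _ ≤ (q ^ (ℓ + 1)) ^ 2 * ∑ ω ∈ freqSet m, ((2 : ℝ) ^ wt ω)⁻¹ * d0 ω ^ 2 := by
          refine mul_le_mul_of_nonneg_left ?_ (sq_nonneg _)
          exact Finset.sum_le_sum_of_subset_of_nonneg hSsub
            (fun ω _ _ => by positivity)
      _ ≤ (q ^ (ℓ + 1)) ^ 2 * 1 :=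
          mul_le_mul_of_nonneg_left hd0 (sq_nonneg _)
      _ = (q ^ (ℓ + 1)) ^ 2 := mul_one _
  have hfirst : Delta m (fun θ => ∑ ω ∈ freqSet m, d ω * Phi ω θ)
      (fun θ => ∑ ω ∈ (freqSet m).filter (fun ω => wt ω ≤ ℓ), d ω * Phi ω θ)
      ≤ q ^ (ℓ + 1) := by
    rw [hDelta]
    calc Real.sqrt (∑ ω ∈ S, d ω ^ 2 * ((2 : ℝ) ^ wt ω)⁻¹)
        ≤ Real.sqrt ((q ^ (ℓ + 1)) ^ 2) := Real.sqrt_le_sqrt hbound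
      _ = q ^ (ℓ + 1) := Real.sqrt_sq (pow_nonneg hq0 _)
  refine ⟨hfirst, hfirst.trans ?_⟩
  have hqe : q ≤ Real.exp (-(2 * (p + pZ))) := by
    have := Real.add_one_le_exp (-(2 * (p + pZ)))
    rw [hq]; linarith
  calc q ^ (ℓ + 1) ≤ (Real.exp (-(2 * (p + pZ)))) ^ (ℓ + 1) :=
        pow_le_pow_left₀ hq0 hqe _
    _ = Real.exp ((ℓ + 1 : ℕ) * (-(2 * (p + pZ)))) := by
        rw [← Real.exp_nat_mul]
    _ ≤ Real.exp (-2 * (p + pZ) * ℓ) := by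
        apply Real.exp_le_exp.mpr
        push_cast
        nlinarith
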